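/- Let R be a commutative Krasner hyperring with nonzero identity, φ a reduction function and δ an expansion function on L(R), and N a proper hyperideal of R. Then the following are equivalent: (i) N is a φ-δ-primary hyperideal; (ii) for every a ∈ R − δ(N), (N : a) = N ∪ (φ(N) : a); (iii) for every a ∈ R − δ(N), (N : a) = N or (N : a) = (φ(N) : a); (iv) for all hyperideals K, L of R with K∘L ⊆ N and K∘L ⊄ φ(N), either K ⊆ N or L ⊆ δ(N); (v) for every hyperideal M of R with M ⊄ δ(N), (N : M) = N or (N : M) = (φ(N) : M). -/

import Mathlib

universe u

/-- A commutative Krasner hyperring with nonzero identity. -/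
class KrasnerHyperring (R : Type u) where
  hadd : R → R → Set R
  mul : R → R → R
  zero : R
  one : R
  neg : R → R
  hadd_nonempty : ∀ a b : R, (hadd a b).Nonempty
  hadd_comm : ∀ a b : R, hadd a b = hadd b a
  hadd_assoc : ∀ a b c : R, (⋃ x ∈ hadd a b, hadd x c) = ⋃ y ∈ hadd b c, hadd a y
  hadd_zero : ∀ a : R, hadd a zero = {a}
  zero_mem_hadd_neg : ∀ a : R, zero ∈ hadd a (neg a)
  neg_unique : ∀ a b : R, zero ∈ hadd a b → b = neg a
  reversible : ∀ a b c : R, c ∈ hadd a b → b ∈ hadd (neg a) c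
  mul_assoc : ∀ a b c : R, mul (mul a b) c = mul a (mul b c)
  mul_comm : ∀ a b : R, mul a b = mul b a
  mul_one : ∀ a : R, mul a one = a
  mul_zero : ∀ a : R, mul a zero = zero
  one_ne_zero : one ≠ zero
  distrib : ∀ a b c : R, (fun x => mul a x) '' hadd b c = hadd (mul a b) (mul a c)

namespace KrasnerHyperring

variable {R : Type u} [KrasnerHyperring R]

/-- A hyperideal of a Krasner hyperring. -/
structure Hyperideal (R : Type u) [KrasnerHyperring R] where
  carrier : Set R
  nonempty' : carrier.Nonempty
  hadd_subset' : ∀ a ∈ carrier, ∀ b ∈ carrier, hadd a b ⊆ carrier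
  neg_mem' : ∀ a ∈ carrier, neg a ∈ carrier
  mul_mem' : ∀ r : R, ∀ a ∈ carrier, mul r a ∈ carrier

instance : SetLike (Hyperideal R) R where
  coe := Hyperideal.carrier
  coe_injective := by rintro ⟨⟩ ⟨⟩ h; congr

/-- A hyperideal is proper if it is not the whole hyperring. -/
def Hyperideal.IsProper (N : Hyperideal R) : Prop := (N : Set R) ≠ Set.univ

/-- `A ⊕ B` for subsets. -/
def haddSet (A B : Set R) : Set R := ⋃ a ∈ A, ⋃ b ∈ B, hadd a b

/-- `A ∘ B` : set of all products. -/
def mulSet (A B : Set R) : Set R := {x : R | ∃ a ∈ A, ∃ b ∈ B, x = mul a b}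

/-- The hyperideal generated by a set (as a set). -/
def genIdeal (S : Set R) : Set R := ⋂₀ {C : Set R | (∃ I : Hyperideal R, C = ↑I) ∧ S ⊆ C}

/-- Products of `n` elements of `S`. -/
def setPow (S : Set R) : ℕ → Set R
  | 0 => Set.univ
  | 1 => S
  | (n+2) => mulSet S (setPow S (n+1))

/-- `N^n` : the hyperideal generated by products of `n` elements of `N`. -/
def idealPow (N : Hyperideal R) (n : ℕ) : Set R := genIdeal (setPow (↑N) n)

/-- Powers of an element. -/
def hpow (a : R) : ℕ → R
  | 0 => one
  | (n+1) => mul a (hpow a n)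

/-- The radical of a set. -/
def radical (A : Set R) : Set R := {a : R | ∃ n : ℕ, 0 < n ∧ hpow a n ∈ A}

/-- `(A : a)`. -/
def colon (A : Set R) (a : R) : Set R := {r : R | mul a r ∈ A}

/-- `(A : M)` for a set `M`. -/
def colonSet (A B : Set R) : Set R := {r : R | ∀ b ∈ B, mul r b ∈ A}

/-- Prime hyperideal. -/
def IsPrime (N : Hyperideal R) : Prop :=
  N.IsProper ∧ ∀ a b : R, mul a b ∈ N → a ∈ N ∨ b ∈ N

/-- Weakly prime hyperideal. -/
def IsWeaklyPrime (N : Hyperideal R) : Prop :=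
  N.IsProper ∧ ∀ a b : R, mul a b ∈ N → mul a b ≠ zero → a ∈ N ∨ b ∈ N

/-- `φ`-prime hyperideal. -/
def IsPhiPrime (φ : Hyperideal R → Set R) (N : Hyperideal R) : Prop :=
  N.IsProper ∧ ∀ a b : R, mul a b ∈ N → mul a b ∉ φ N → a ∈ N ∨ b ∈ N

/-- Primary hyperideal. -/
def IsPrimary (N : Hyperideal R) : Prop :=
  N.IsProper ∧ ∀ a b : R, mul a b ∈ N → a ∈ N ∨ ∃ k : ℕ, 0 < k ∧ hpow b k ∈ N

/-- `φ`-primary hyperideal. -/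
def IsPhiPrimary (φ : Hyperideal R → Set R) (N : Hyperideal R) : Prop :=
  N.IsProper ∧ ∀ a b : R, mul a b ∈ N → mul a b ∉ φ N →
    a ∈ N ∨ ∃ k : ℕ, 0 < k ∧ hpow b k ∈ N

/-- `δ`-primary hyperideal. -/
def IsDeltaPrimary (δ : Hyperideal R → Hyperideal R) (N : Hyperideal R) : Prop :=
  N.IsProper ∧ ∀ a b : R, mul a b ∈ N → a ∈ N ∨ b ∈ δ N

/-- `φ`-`δ`-primary hyperideal. -/
def IsPhiDeltaPrimary (φ : Hyperideal R → Set R) (δ : Hyperideal R → Hyperideal R)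
    (N : Hyperideal R) : Prop :=
  N.IsProper ∧ ∀ a b : R, mul a b ∈ N → mul a b ∉ φ N → a ∈ N ∨ b ∈ δ N

/-- `φ : L(R) → L(R) ∪ {∅}` : every value is a hyperideal or the empty set. -/
def MapsToIdealOrEmpty (φ : Hyperideal R → Set R) : Prop :=
  ∀ I : Hyperideal R, φ I = ∅ ∨ ∃ J : Hyperideal R, φ I = ↑J

/-- A reduction function. -/
def IsReduction (φ : Hyperideal R → Set R) : Prop :=
  MapsToIdealOrEmpty φ ∧ (∀ I : Hyperideal R, φ I ⊆ ↑I) ∧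
    ∀ I J : Hyperideal R, (I : Set R) ⊆ ↑J → φ I ⊆ φ J

/-- An expansion function. -/
def IsExpansion (δ : Hyperideal R → Hyperideal R) : Prop :=
  (∀ I : Hyperideal R, (I : Set R) ⊆ ↑(δ I)) ∧
    ∀ I J : Hyperideal R, (I : Set R) ⊆ ↑J → (δ I : Set R) ⊆ ↑(δ J)

/-- `φ_w(N) = ⋂_{n ≥ 1} N^n`. -/
def phiW (N : Hyperideal R) : Set R := ⋂ (n : ℕ) (_ : 1 ≤ n), idealPow N n

lemma zero_mem (N : Hyperideal R) : zero ∈ N := by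
  obtain ⟨a, ha⟩ := N.nonempty'
  exact N.hadd_subset' a ha (neg a) (N.neg_mem' a ha) (zero_mem_hadd_neg a)

lemma proper_of_subset_proper {M T : Hyperideal R} (h : (M : Set R) ⊆ ↑T)
    (hT : T.IsProper) : M.IsProper :=
  fun hu => hT (Set.univ_subset_iff.mp (hu ▸ h))

lemma zero_mul' (a : R) : mul zero a = zero := by rw [mul_comm]; exact mul_zero a

lemma mul_mem_hadd {b c z : R} (a : R) (hz : z ∈ hadd b c) :
    mul a z ∈ hadd (mul a b) (mul a c) := by
  rw [← distrib]; exact ⟨z, hz, rfl⟩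

lemma mul_neg' (a b : R) : mul a (neg b) = neg (mul a b) := by
  apply neg_unique
  have h := mul_mem_hadd a (zero_mem_hadd_neg b)
  rwa [mul_zero] at h

lemma hadd_cancel (J : Hyperideal R) {u w z : R} (hu : u ∈ J) (hz : z ∈ J)
    (h : z ∈ hadd u w) : w ∈ J :=
  J.hadd_subset' (neg u) (J.neg_mem' u hu) z hz (reversible u w z h)

lemma subset_or_subset (H A B : Hyperideal R) (h : (H : Set R) ⊆ ↑A ∪ ↑B) :
    (H : Set R) ⊆ ↑A ∨ (H : Set R) ⊆ ↑B := by
  by_contra hc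
  push_neg at hc
  obtain ⟨x, hxH, hxA⟩ := Set.not_subset.mp hc.1
  obtain ⟨y, hyH, hyB⟩ := Set.not_subset.mp hc.2
  have hxB : x ∈ (B : Set R) := (h hxH).resolve_left hxA
  have hyA : y ∈ (A : Set R) := (h hyH).resolve_right hyB
  obtain ⟨z, hz⟩ := hadd_nonempty x y
  have hzH : z ∈ (H : Set R) := H.hadd_subset' x hxH y hyH hz
  rcases h hzH with hzA | hzB
  · exact hxA (hadd_cancel A hyA hzA (by rw [hadd_comm] at hz; exact hz))
  · exact hyB (hadd_cancel B hxB hzB hz)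

lemma mul_mul_mul (r a s b : R) :
    mul (mul r a) (mul s b) = mul (mul r s) (mul a b) := by
  rw [mul_assoc r a (mul s b), mul_assoc r s (mul a b), ← mul_assoc a s b,
    mul_comm a s, mul_assoc s a b]

/-- `(J : a)` as a hyperideal. -/
def colonIdeal (J : Hyperideal R) (a : R) : Hyperideal R where
  carrier := colon (↑J) a
  nonempty' := ⟨zero, show mul a zero ∈ (J : Set R) by rw [mul_zero]; exact zero_mem J⟩
  hadd_subset' := fun x hx y hy z hz =>
    J.hadd_subset' (mul a x) hx (mul a y) hy (mul_mem_hadd a hz)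
  neg_mem' := fun x hx => show mul a (neg x) ∈ (J : Set R) by
    rw [mul_neg']; exact J.neg_mem' (mul a x) hx
  mul_mem' := fun r x hx => show mul a (mul r x) ∈ (J : Set R) by
    rw [← mul_assoc, mul_comm a r, mul_assoc]; exact J.mul_mem' r (mul a x) hx

/-- `(J : M)` as a hyperideal. -/
def colonSetIdeal (J : Hyperideal R) (M : Set R) : Hyperideal R where
  carrier := colonSet (↑J) M
  nonempty' := ⟨zero, fun b _ => by rw [zero_mul']; exact zero_mem J⟩
  hadd_subset' := by
    intro x hx y hy z hz b hb
    have h1 : mul b z ∈ hadd (mul b x) (mul b y) := mul_mem_hadd b hz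
    have h2 := J.hadd_subset' (mul b x) (by rw [mul_comm]; exact hx b hb)
      (mul b y) (by rw [mul_comm]; exact hy b hb) h1
    show mul z b ∈ (J : Set R)
    rw [mul_comm]; exact h2
  neg_mem' := by
    intro x hx b hb
    show mul (neg x) b ∈ (J : Set R)
    rw [mul_comm, mul_neg']
    exact J.neg_mem' (mul b x) (by rw [mul_comm]; exact hx b hb)
  mul_mem' := by
    intro r x hx b hb
    show mul (mul r x) b ∈ (J : Set R)
    rw [mul_assoc]
    exact J.mul_mem' r (mul x b) (hx b hb)

/-- The principal hyperideal generated by `a`. -/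
def princ (a : R) : Hyperideal R where
  carrier := {x | ∃ r, x = mul r a}
  nonempty' := ⟨a, one, by rw [mul_comm, mul_one]⟩
  hadd_subset' := by
    rintro x ⟨r, rfl⟩ y ⟨s, rfl⟩ z hz
    have h : hadd (mul r a) (mul s a) = (fun x => mul a x) '' hadd r s := by
      rw [distrib, mul_comm a r, mul_comm a s]
    rw [h] at hz
    obtain ⟨t, _, rfl⟩ := hz
    exact ⟨t, mul_comm a t⟩
  neg_mem' := by
    rintro x ⟨r, rfl⟩
    exact ⟨neg r, by rw [mul_comm (neg r) a, mul_neg', mul_comm a r]⟩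
  mul_mem' := by
    rintro s x ⟨r, rfl⟩
    exact ⟨mul s r, (mul_assoc s r a).symm⟩

lemma self_mem_princ (a : R) : a ∈ (princ a : Set R) :=
  ⟨one, by rw [mul_comm, mul_one]⟩

/-- STATEMENT 14: characterizations of `φ`-`δ`-primary hyperideals. -/
theorem phiDeltaPrimary_characterizations {R : Type u} [KrasnerHyperring R]
    (φ : Hyperideal R → Set R) (δ : Hyperideal R → Hyperideal R)
    (hφ : IsReduction φ) (hδ : IsExpansion δ)
    (N : Hyperideal R) (hN : N.IsProper) :
    (IsPhiDeltaPrimary φ δ N ↔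
      ∀ a : R, a ∉ (δ N : Set R) →
        colon (N : Set R) a = (N : Set R) ∪ colon (φ N) a) ∧
    (IsPhiDeltaPrimary φ δ N ↔
      ∀ a : R, a ∉ (δ N : Set R) →
        colon (N : Set R) a = (N : Set R) ∨ colon (N : Set R) a = colon (φ N) a) ∧
    (IsPhiDeltaPrimary φ δ N ↔
      ∀ K L : Hyperideal R, mulSet (K : Set R) (L : Set R) ⊆ (N : Set R) →
        ¬ mulSet (K : Set R) (L : Set R) ⊆ φ N →
        (K : Set R) ⊆ (N : Set R) ∨ (L : Set R) ⊆ (δ N : Set R)) ∧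
    (IsPhiDeltaPrimary φ δ N ↔
      ∀ M : Hyperideal R, ¬ (M : Set R) ⊆ (δ N : Set R) →
        colonSet (N : Set R) (M : Set R) = (N : Set R) ∨
          colonSet (N : Set R) (M : Set R) = colonSet (φ N) (M : Set R)) := by
  have hφsub : ∀ I : Hyperideal R, φ I ⊆ (I : Set R) := hφ.2.1
  -- (i) → (ii)
  have i_to_ii : IsPhiDeltaPrimary φ δ N →
      ∀ a : R, a ∉ (δ N : Set R) →
        colon (N : Set R) a = (N : Set R) ∪ colon (φ N) a := by
    rintro ⟨_, hp⟩ a ha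
    ext r
    simp only [Set.mem_union]
    constructor
    · intro hr
      by_cases hrφ : mul a r ∈ φ N
      · exact Or.inr hrφ
      · rcases hp r a (by rw [mul_comm]; exact hr) (by rw [mul_comm]; exact hrφ) with h | h
        · exact Or.inl h
        · exact absurd h ha
    · rintro (hr | hr)
      · exact N.mul_mem' a r hr
      · exact hφsub N hr
  -- (ii) → (i)
  have ii_to_i : (∀ a : R, a ∉ (δ N : Set R) →
      colon (N : Set R) a = (N : Set R) ∪ colon (φ N) a) →
      IsPhiDeltaPrimary φ δ N := by
    intro h
    refine ⟨hN, fun a b hab hnab => ?_⟩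
    by_cases hb : b ∈ (δ N : Set R)
    · exact Or.inr hb
    · have heq := h b hb
      have ha : a ∈ colon (N : Set R) b := by
        show mul b a ∈ (N : Set R); rw [mul_comm]; exact hab
      rw [heq] at ha
      rcases ha with ha | ha
      · exact Or.inl ha
      · exact absurd (show mul a b ∈ φ N by rw [mul_comm]; exact ha) hnab
  -- (ii) → (iii)
  have ii_to_iii : (∀ a : R, a ∉ (δ N : Set R) →
      colon (N : Set R) a = (N : Set R) ∪ colon (φ N) a) →
      ∀ a : R, a ∉ (δ N : Set R) →
        colon (N : Set R) a = (N : Set R) ∨ colon (N : Set R) a = colon (φ N) a := by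
    intro h a ha
    have heq := h a ha
    rcases hφ.1 N with hφe | ⟨J, hJ⟩
    · left
      rw [heq, hφe]
      have he : colon (∅ : Set R) a = ∅ := by
        ext r; simp [colon]
      rw [he, Set.union_empty]
    · rw [hJ] at heq
      rcases subset_or_subset (colonIdeal N a) N (colonIdeal J a) heq.subset with hs | hs
      · left
        refine Set.Subset.antisymm hs fun r hr => ?_
        exact N.mul_mem' a r hr
      · right
        rw [hJ]
        refine Set.Subset.antisymm hs fun r hr => ?_
        have hJN : (J : Set R) ⊆ (N : Set R) := hJ ▸ hφsub N
        exact hJN hr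
  -- (iii) → (i)
  have iii_to_i : (∀ a : R, a ∉ (δ N : Set R) →
      colon (N : Set R) a = (N : Set R) ∨ colon (N : Set R) a = colon (φ N) a) →
      IsPhiDeltaPrimary φ δ N := by
    intro h
    refine ⟨hN, fun a b hab hnab => ?_⟩
    by_cases hb : b ∈ (δ N : Set R)
    · exact Or.inr hb
    · left
      have ha : a ∈ colon (N : Set R) b := by
        show mul b a ∈ (N : Set R); rw [mul_comm]; exact hab
      rcases h b hb with he | he
      · rw [he] at ha; exact ha
      · rw [he] at ha
        exact absurd (show mul a b ∈ φ N by rw [mul_comm]; exact ha) hnab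
  -- (i) → (iv)
  have i_to_iv : IsPhiDeltaPrimary φ δ N →
      ∀ K L : Hyperideal R, mulSet (K : Set R) (L : Set R) ⊆ (N : Set R) →
        ¬ mulSet (K : Set R) (L : Set R) ⊆ φ N →
        (K : Set R) ⊆ (N : Set R) ∨ (L : Set R) ⊆ (δ N : Set R) := by
    rintro ⟨_, hp⟩ K L hKL hKLφ
    by_contra hc
    push_neg at hc
    obtain ⟨hKN, hLδ⟩ := hc
    obtain ⟨k0, hk0K, hk0N⟩ := Set.not_subset.mp hKN
    obtain ⟨l0, hl0L, hl0δ⟩ := Set.not_subset.mp hLδ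
    have hk0l0N : mul k0 l0 ∈ (N : Set R) := hKL ⟨k0, hk0K, l0, hl0L, rfl⟩
    have hk0l0φ : mul k0 l0 ∈ φ N := by
      by_contra hx
      rcases hp k0 l0 hk0l0N hx with h | h
      · exact hk0N h
      · exact hl0δ h
    rcases hφ.1 N with hφe | ⟨J, hJ⟩
    · rw [hφe] at hk0l0φ
      exact absurd hk0l0φ (Set.notMem_empty _)
    have key : ∀ x u v z : R, z ∈ hadd v u → mul x u ∈ (J : Set R) →
        mul x z ∈ (J : Set R) → mul x v ∈ (J : Set R) := by
      intro x u v z hz hu hzJ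
      have h1 : mul x z ∈ hadd (mul x v) (mul x u) := mul_mem_hadd x hz
      rw [hadd_comm] at h1
      exact hadd_cancel J hu hzJ h1
    have B : ∀ k ∈ (K : Set R), ∀ l ∈ (L : Set R), l ∉ (δ N : Set R) →
        mul k l ∈ (J : Set R) := by
      intro k hk l hl hlδ
      by_cases hkN : k ∈ (N : Set R)
      · obtain ⟨z, hz⟩ := hadd_nonempty k k0
        have hzK : z ∈ (K : Set R) := K.hadd_subset' k hk k0 hk0K hz
        have hzN : z ∉ (N : Set R) := fun hzN => hk0N (hadd_cancel N hkN hzN hz)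
        have hzl : mul z l ∈ (J : Set R) := by
          have hin : mul z l ∈ (N : Set R) := hKL ⟨z, hzK, l, hl, rfl⟩
          by_contra hx
          rcases hp z l hin (by rw [hJ]; exact hx) with h | h
          · exact hzN h
          · exact hlδ h
        have hk0l : mul k0 l ∈ (J : Set R) := by
          have hin : mul k0 l ∈ (N : Set R) := hKL ⟨k0, hk0K, l, hl, rfl⟩
          by_contra hx
          rcases hp k0 l hin (by rw [hJ]; exact hx) with h | h
          · exact hk0N h
          · exact hlδ h
        have hfin := key l k0 k z hz (by rw [mul_comm]; exact hk0l)
          (by rw [mul_comm]; exact hzl)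
        rw [mul_comm]; exact hfin
      · have hin : mul k l ∈ (N : Set R) := hKL ⟨k, hk, l, hl, rfl⟩
        by_contra hx
        rcases hp k l hin (by rw [hJ]; exact hx) with h | h
        · exact hkN h
        · exact hlδ h
    have C : ∀ k ∈ (K : Set R), ∀ l ∈ (L : Set R), mul k l ∈ (J : Set R) := by
      intro k hk l hl
      by_cases hlδ : l ∈ (δ N : Set R)
      · obtain ⟨z, hz⟩ := hadd_nonempty l l0
        have hzL : z ∈ (L : Set R) := L.hadd_subset' l hl l0 hl0L hz
        have hzδ : z ∉ ((δ N : Hyperideal R) : Set R) :=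
          fun hzd => hl0δ (hadd_cancel (δ N) hlδ hzd hz)
        exact key k l0 l z hz (B k hk l0 hl0L hl0δ) (B k hk z hzL hzδ)
      · exact B k hk l hl hlδ
    apply hKLφ
    rw [hJ]
    rintro x ⟨k, hk, l, hl, rfl⟩
    exact C k hk l hl
  -- (iv) → (i)
  have iv_to_i : (∀ K L : Hyperideal R, mulSet (K : Set R) (L : Set R) ⊆ (N : Set R) →
      ¬ mulSet (K : Set R) (L : Set R) ⊆ φ N →
      (K : Set R) ⊆ (N : Set R) ∨ (L : Set R) ⊆ (δ N : Set R)) →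
      IsPhiDeltaPrimary φ δ N := by
    intro h
    refine ⟨hN, fun a b hab hnab => ?_⟩
    have h1 : mulSet (↑(princ a) : Set R) (↑(princ b) : Set R) ⊆ (N : Set R) := by
      rintro x ⟨k, ⟨r, rfl⟩, l, ⟨s, rfl⟩, rfl⟩
      rw [mul_mul_mul]
      exact N.mul_mem' (mul r s) (mul a b) hab
    have h2 : ¬ mulSet (↑(princ a) : Set R) (↑(princ b) : Set R) ⊆ φ N := by
      intro hs
      exact hnab (hs ⟨a, self_mem_princ a, b, self_mem_princ b, rfl⟩)
    rcases h (princ a) (princ b) h1 h2 with hs | hs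
    · exact Or.inl (hs (self_mem_princ a))
    · exact Or.inr (hs (self_mem_princ b))
  -- (iv) → (v)
  have iv_to_v : (∀ K L : Hyperideal R, mulSet (K : Set R) (L : Set R) ⊆ (N : Set R) →
      ¬ mulSet (K : Set R) (L : Set R) ⊆ φ N →
      (K : Set R) ⊆ (N : Set R) ∨ (L : Set R) ⊆ (δ N : Set R)) →
      ∀ M : Hyperideal R, ¬ (M : Set R) ⊆ (δ N : Set R) →
        colonSet (N : Set R) (M : Set R) = (N : Set R) ∨
          colonSet (N : Set R) (M : Set R) = colonSet (φ N) (M : Set R) := by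
    intro h M hM
    by_cases hc : mulSet (↑(colonSetIdeal N (M : Set R)) : Set R) (M : Set R) ⊆ φ N
    · right
      refine Set.Subset.antisymm (fun r hr b hb => ?_) (fun r hr b hb => ?_)
      · exact hc ⟨r, hr, b, hb, rfl⟩
      · exact hφsub N (hr b hb)
    · left
      rcases h (colonSetIdeal N (M : Set R)) M
        (by rintro x ⟨k, hk, m, hm, rfl⟩; exact hk m hm) hc with hs | hs
      · refine Set.Subset.antisymm hs (fun r hr b hb => ?_)
        rw [mul_comm]
        exact N.mul_mem' b r hr
      · exact absurd hs hM
  -- (v) → (i)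
  have v_to_i : (∀ M : Hyperideal R, ¬ (M : Set R) ⊆ (δ N : Set R) →
      colonSet (N : Set R) (M : Set R) = (N : Set R) ∨
        colonSet (N : Set R) (M : Set R) = colonSet (φ N) (M : Set R)) →
      IsPhiDeltaPrimary φ δ N := by
    intro h
    refine ⟨hN, fun a b hab hnab => ?_⟩
    by_cases hb : b ∈ (δ N : Set R)
    · exact Or.inr hb
    · left
      have hM : ¬ (↑(princ b) : Set R) ⊆ (δ N : Set R) :=
        fun hs => hb (hs (self_mem_princ b))
      have haM : a ∈ colonSet (N : Set R) (↑(princ b) : Set R) := by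
        rintro x ⟨s, rfl⟩
        show mul a (mul s b) ∈ (N : Set R)
        rw [← mul_assoc, mul_comm a s, mul_assoc]
        exact N.mul_mem' s (mul a b) hab
      rcases h (princ b) hM with he | he
      · rw [he] at haM; exact haM
      · rw [he] at haM
        exact absurd (haM b (self_mem_princ b)) hnab
  exact ⟨⟨i_to_ii, ii_to_i⟩, ⟨fun hp => ii_to_iii (i_to_ii hp), iii_to_i⟩,
    ⟨i_to_iv, iv_to_i⟩, ⟨fun hp => iv_to_v (i_to_iv hp), v_to_i⟩⟩

end KrasnerHyperring
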